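/- Let M be the loop of determinant-1 Zorn vector matrices over the finite field F_q. The center Z(M) has order 1 if q is even (characteristic 2), and order 2 if q is odd; in the odd case Z(M) = {I, −I} where I is the identity Zorn matrix. -/

import Mathlib

open Matrix

/-- A Zorn vector matrix `[[a, α], [β, b]]` over a field `F`. -/
structure ZornMatrix (F : Type*) [Field F] where
  a : F
  α : Fin 3 → F
  β : Fin 3 → F
  b : F

namespace ZornMatrix

variable {F : Type*} [Field F]

/-- Zorn's vector matrix multiplication. -/
def mul (M N : ZornMatrix F) : ZornMatrix F :=
  ⟨M.a * N.a + M.α ⬝ᵥ N.β,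
   M.a • N.α + N.b • M.α - crossProduct M.β N.β,
   N.a • M.β + M.b • N.β + crossProduct M.α N.α,
   M.β ⬝ᵥ N.α + M.b * N.b⟩

/-- The determinant of a Zorn vector matrix. -/
def det (M : ZornMatrix F) : F := M.a * M.b - M.α ⬝ᵥ M.β

/-- The identity Zorn vector matrix. -/
def id : ZornMatrix F := ⟨1, 0, 0, 1⟩

end ZornMatrix


namespace ZornMatrix

variable {F : Type*} [Field F]

lemma cross_zero' (v : Fin 3 → F) : v ⨯₃ (0 : Fin 3 → F) = 0 := by simp
lemma zero_cross' (v : Fin 3 → F) : (0 : Fin 3 → F) ⨯₃ v = 0 := by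
  rw [← neg_eq_zero, cross_anticomm]; simp
lemma cross_neg' (v w : Fin 3 → F) : v ⨯₃ (-w) = -(v ⨯₃ w) := by simp
lemma neg_cross' (v w : Fin 3 → F) : (-v) ⨯₃ w = -(v ⨯₃ w) := by simp

lemma ext' {M N : ZornMatrix F} (h1 : M.a = N.a) (h2 : M.α = N.α)
    (h3 : M.β = N.β) (h4 : M.b = N.b) : M = N := by
  cases M; cases N; simp_all

/-- negation of a Zorn matrix -/
def neg (x : ZornMatrix F) : ZornMatrix F := ⟨-x.a, -x.α, -x.β, -x.b⟩

/-- the negative identity -/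
def negId : ZornMatrix F := ⟨-1, 0, 0, -1⟩

lemma id_mul (x : ZornMatrix F) : mul id x = x := by
  refine ext' ?_ ?_ ?_ ?_ <;>
    simp [mul, id, cross_zero', zero_cross']

lemma mul_id (x : ZornMatrix F) : mul x id = x := by
  refine ext' ?_ ?_ ?_ ?_ <;>
    simp [mul, id, cross_zero', zero_cross']

lemma negId_mul (x : ZornMatrix F) : mul negId x = neg x := by
  refine ext' ?_ ?_ ?_ ?_ <;>
    simp [mul, negId, neg, cross_zero', zero_cross']

lemma mul_negId (x : ZornMatrix F) : mul x negId = neg x := by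
  refine ext' ?_ ?_ ?_ ?_ <;>
    simp [mul, negId, neg, cross_zero', zero_cross']

lemma neg_mul' (x y : ZornMatrix F) : mul (neg x) y = neg (mul x y) := by
  refine ext' ?_ ?_ ?_ ?_ <;>
    simp only [mul, neg, neg_cross', cross_neg', neg_dotProduct,
      dotProduct_neg, neg_smul, smul_neg, neg_mul, mul_neg] <;>
    abel

lemma mul_neg' (x y : ZornMatrix F) : mul x (neg y) = neg (mul x y) := by
  refine ext' ?_ ?_ ?_ ?_ <;>
    simp only [mul, neg, neg_cross', cross_neg', neg_dotProduct,
      dotProduct_neg, neg_smul, smul_neg, neg_mul, mul_neg] <;>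
    abel

lemma center_eq :
    {z : ZornMatrix F | z.det = 1 ∧
        (∀ x : ZornMatrix F, x.det = 1 → mul z x = mul x z) ∧
        (∀ x y : ZornMatrix F, x.det = 1 → y.det = 1 →
          mul z (mul x y) = mul (mul z x) y ∧
          mul x (mul z y) = mul (mul x z) y ∧
          mul (mul x y) z = mul x (mul y z))} = {ZornMatrix.id, negId} := by
  ext z
  simp only [Set.mem_setOf_eq, Set.mem_insert_iff, Set.mem_singleton_iff]
  constructor
  · rintro ⟨hdet, hcomm, -⟩
    have hβ : z.β = 0 := by
      funext i
      have h := congrArg ZornMatrix.b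
        (hcomm ⟨1, Pi.single i 1, 0, 1⟩ (by simp [ZornMatrix.det]))
      simpa [mul] using h
    have hα : z.α = 0 := by
      funext i
      have h := congrArg ZornMatrix.a
        (hcomm ⟨1, 0, Pi.single i 1, 1⟩ (by simp [ZornMatrix.det]))
      simpa [mul] using h
    have hab : z.a = z.b := by
      have h := congrFun (congrArg ZornMatrix.α
        (hcomm ⟨1, Pi.single 0 1, 0, 1⟩ (by simp [ZornMatrix.det]))) 0
      simpa [mul, hα, hβ, cross_zero', zero_cross'] using h
    have ha : z.a * z.a = 1 := by
      have := hdet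
      simp only [ZornMatrix.det, hα, hβ, zero_dotProduct, sub_zero] at this
      rw [← hab] at this; exact this
    rcases mul_self_eq_one_iff.mp ha with h1 | h1
    · left
      exact ext' h1 (by simp [hα, id]) (by simp [hβ, id]) (by rw [← hab, h1]; rfl)
    · right
      exact ext' h1 (by simp [hα, negId]) (by simp [hβ, negId]) (by rw [← hab, h1]; rfl)
  · rintro (rfl | rfl)
    · refine ⟨by simp [ZornMatrix.det, id], fun x _ => by rw [id_mul, mul_id],
        fun x y _ _ => ⟨?_, ?_, ?_⟩⟩ <;> simp only [id_mul, mul_id]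
    · refine ⟨by simp [ZornMatrix.det, negId], fun x _ => by rw [negId_mul, mul_negId],
        fun x y _ _ => ⟨?_, ?_, ?_⟩⟩
      · rw [negId_mul, negId_mul, neg_mul']
      · rw [negId_mul, mul_negId, mul_neg', neg_mul']
      · rw [mul_negId, mul_negId, mul_neg']

end ZornMatrix

open ZornMatrix in
/-- The center of the loop `M` of determinant-one Zorn vector matrices over `F_q` is
trivial if `q` is even (characteristic 2), and equals `{I, -I}` (of order 2) if `q` is odd. -/
theorem stmt9 {F : Type*} [Field F] [Fintype F] :
    letI Z : Set (ZornMatrix F) :=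
      {z : ZornMatrix F | z.det = 1 ∧
        (∀ x : ZornMatrix F, x.det = 1 → mul z x = mul x z) ∧
        (∀ x y : ZornMatrix F, x.det = 1 → y.det = 1 →
          mul z (mul x y) = mul (mul z x) y ∧
          mul x (mul z y) = mul (mul x z) y ∧
          mul (mul x y) z = mul x (mul y z))}
    (ringChar F = 2 → Z = {ZornMatrix.id} ∧ Nat.card Z = 1) ∧
    (ringChar F ≠ 2 →
      Z = {ZornMatrix.id, ⟨-1, 0, 0, -1⟩} ∧ Nat.card Z = 2) := by
  constructor
  · intro hchar
    haveI : CharP F 2 := hchar ▸ ringChar.charP F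
    have hneg : (negId : ZornMatrix F) = ZornMatrix.id := by
      have h1 : (-1 : F) = 1 := by rw [CharTwo.neg_eq]
      simp only [negId, ZornMatrix.id, h1]
    have hZ : {z : ZornMatrix F | z.det = 1 ∧
        (∀ x : ZornMatrix F, x.det = 1 → mul z x = mul x z) ∧
        (∀ x y : ZornMatrix F, x.det = 1 → y.det = 1 →
          mul z (mul x y) = mul (mul z x) y ∧
          mul x (mul z y) = mul (mul x z) y ∧
          mul (mul x y) z = mul x (mul y z))} = {ZornMatrix.id} := by
      rw [center_eq, hneg, Set.pair_eq_singleton]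
    refine ⟨hZ, ?_⟩
    rw [hZ]
    simp
  · intro hchar
    have hne : (ZornMatrix.id : ZornMatrix F) ≠ negId := by
      intro h
      have h1 : (1 : F) = -1 := congrArg ZornMatrix.a h
      have h2 : (2 : F) = 0 := by linear_combination h1
      exact Ring.two_ne_zero hchar h2
    have hZ : {z : ZornMatrix F | z.det = 1 ∧
        (∀ x : ZornMatrix F, x.det = 1 → mul z x = mul x z) ∧
        (∀ x y : ZornMatrix F, x.det = 1 → y.det = 1 →
          mul z (mul x y) = mul (mul z x) y ∧
          mul x (mul z y) = mul (mul x z) y ∧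
          mul (mul x y) z = mul x (mul y z))} = {ZornMatrix.id, negId} := center_eq
    refine ⟨hZ, ?_⟩
    rw [hZ, Nat.card_coe_set_eq, Set.ncard_pair hne]
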